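/- Let Γ₁, Γ₂, Γ₃ be nonzero real numbers with Γ₁ + Γ₂ + Γ₃ = 0, and let t ∈ ℂ be nonzero. Define w₁₂ = Γ₃·t, w₂₃ = Γ₁·t, w₃₁ = Γ₂·t, and w_{kj} = −w_{jk} for each pair. Then the three complex numbers Γ₂/w₂₁ + Γ₃/w₃₁, Γ₁/w₁₂ + Γ₃/w₃₂, and Γ₁/w₁₃ + Γ₂/w₂₃ cannot all be equal. -/

import Mathlib

/-- The system-level contradiction in the proof of Proposition 4.7: with
w₁₂ = Γ₃t, w₂₃ = Γ₁t, w₃₁ = Γ₂t (t ≠ 0) and w_{kj} = −w_{jk}, the three quantities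
Γ₂/w₂₁ + Γ₃/w₃₁, Γ₁/w₁₂ + Γ₃/w₃₂, Γ₁/w₁₃ + Γ₂/w₂₃ cannot all be equal when
Γ₁ + Γ₂ + Γ₃ = 0. -/
theorem triangle_system_contradiction
    (Γ₁ Γ₂ Γ₃ : ℝ) (h1 : Γ₁ ≠ 0) (h2 : Γ₂ ≠ 0) (h3 : Γ₃ ≠ 0)
    (hsum : Γ₁ + Γ₂ + Γ₃ = 0) (t : ℂ) (ht : t ≠ 0)
    (w12 w23 w31 w21 w32 w13 : ℂ)
    (h12 : w12 = (Γ₃ : ℂ) * t) (h23 : w23 = (Γ₁ : ℂ) * t) (h31 : w31 = (Γ₂ : ℂ) * t)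
    (h21 : w21 = -w12) (h32 : w32 = -w23) (h13 : w13 = -w31) :
    ¬ ((Γ₂ : ℂ) / w21 + (Γ₃ : ℂ) / w31 = (Γ₁ : ℂ) / w12 + (Γ₃ : ℂ) / w32 ∧
       (Γ₁ : ℂ) / w12 + (Γ₃ : ℂ) / w32 = (Γ₁ : ℂ) / w13 + (Γ₂ : ℂ) / w23) := by
  rintro ⟨e1, e2⟩
  subst h21 h32 h13 h12 h23 h31
  have c1 : (Γ₁ : ℂ) ≠ 0 := Complex.ofReal_ne_zero.mpr h1
  have c2 : (Γ₂ : ℂ) ≠ 0 := Complex.ofReal_ne_zero.mpr h2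
  have c3 : (Γ₃ : ℂ) ≠ 0 := Complex.ofReal_ne_zero.mpr h3
  field_simp at e1 e2
  have ht2 : t ^ 3 ≠ 0 := pow_ne_zero 3 ht
  have f1 : ((((Γ₂^2 - Γ₃^2) * (Γ₃ * Γ₁) : ℝ)) : ℂ) * t ^ 3
      = (((Γ₃^2 - Γ₁^2) * (Γ₃ * Γ₂) : ℝ) : ℂ) * t ^ 3 := by
    push_cast; linear_combination (-(Γ₃ : ℂ) * t ^ 3) * e1
  have f2 : ((((Γ₃^2 - Γ₁^2) * (Γ₂ * Γ₁) : ℝ)) : ℂ) * t ^ 3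
      = (((Γ₁^2 - Γ₂^2) * (Γ₃ * Γ₁) : ℝ) : ℂ) * t ^ 3 := by
    push_cast; linear_combination (-(Γ₁ : ℂ) * t ^ 3) * e2
  have r1 : (Γ₂^2 - Γ₃^2) * (Γ₃ * Γ₁) = (Γ₃^2 - Γ₁^2) * (Γ₃ * Γ₂) := by
    exact_mod_cast mul_right_cancel₀ ht2 f1
  have r2 : (Γ₃^2 - Γ₁^2) * (Γ₂ * Γ₁) = (Γ₁^2 - Γ₂^2) * (Γ₃ * Γ₁) := by
    exact_mod_cast mul_right_cancel₀ ht2 f2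
  have p : Γ₁ * Γ₂ = Γ₃ ^ 2 := by
    have hp : Γ₃ ^ 2 * (Γ₁ * Γ₂) = Γ₃ ^ 2 * Γ₃ ^ 2 := by
      linear_combination -r1 + Γ₃ * (Γ₁ * Γ₂ - Γ₃ ^ 2) * hsum
    exact mul_left_cancel₀ (pow_ne_zero 2 h3) hp
  have q : Γ₂ * Γ₃ = Γ₁ ^ 2 := by
    have hq : Γ₁ ^ 2 * (Γ₂ * Γ₃) = Γ₁ ^ 2 * Γ₁ ^ 2 := by
      linear_combination -r2 + Γ₁ * (Γ₂ * Γ₃ - Γ₁ ^ 2) * hsum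
    exact mul_left_cancel₀ (pow_ne_zero 2 h1) hq
  have key : Γ₁ ^ 2 + Γ₁ * Γ₃ + Γ₃ ^ 2 = 0 := by
    linear_combination -p + Γ₁ * hsum
  have h1sq : 0 < Γ₁ ^ 2 := pow_pos (abs_pos.mpr h1) 2 |>.trans_le (by rw [sq_abs])
  nlinarith [sq_nonneg (Γ₁ + Γ₃), sq_nonneg Γ₃, key, h1sq]
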